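/- Let f₃(x) = 2x on [0,1] and let f̂_b be the beta kernel estimator built from n i.i.d. observations with density f₃. Then for p ≥ 1 and all b small enough, ∫₀¹ |E(f̂_b(t)) - f₃(t)|^p dt ≥ C b^p for some constant C > 0 independent of b and n. In particular, E(‖f̂_b - f₃‖_p^p) ≥ C b^p for p ≥ 2. -/

import Mathlib

open MeasureTheory Set ProbabilityTheory
open scoped NNReal ENNReal

noncomputable def betaFn (a c : ℝ) : ℝ := ∫ x in (0:ℝ)..1, x ^ (a - 1) * (1 - x) ^ (c - 1)

noncomputable def betaKernel (t b x : ℝ) : ℝ :=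
  x ^ (t / b) * (1 - x) ^ ((1 - t) / b) / betaFn (t / b + 1) ((1 - t) / b + 1)

/-- The density `f₃(x) = 2x` on `[0,1]`, as a measure on `ℝ`. -/
noncomputable def f3Measure : Measure ℝ :=
  volume.withDensity (fun x => ENNReal.ofReal (Set.indicator (Set.Icc 0 1) (fun y => 2 * y) x))

lemma measurable_cpow2 : Measurable fun p : ℂ × ℂ => p.1 ^ p.2 := by
  have h : (fun p : ℂ × ℂ => p.1 ^ p.2) = fun p =>
      if p.1 = 0 then (if p.2 = 0 then 1 else 0) else Complex.exp (Complex.log p.1 * p.2) :=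
    funext fun p => Complex.cpow_def p.1 p.2
  rw [h]
  apply Measurable.ite (measurableSet_eq_fun measurable_fst measurable_const)
  · exact Measurable.ite (measurableSet_eq_fun measurable_snd measurable_const)
      measurable_const measurable_const
  · exact Complex.measurable_exp.comp
      ((Complex.measurable_log.comp measurable_fst).mul measurable_snd)

lemma measurable_rpow2 : Measurable fun p : ℝ × ℝ => p.1 ^ p.2 := by
  simp only [Real.rpow_def]
  exact Complex.measurable_re.comp (measurable_cpow2.comp
    ((Complex.measurable_ofReal.comp measurable_fst).prodMk
      (Complex.measurable_ofReal.comp measurable_snd)))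

lemma contin_integrand {q r : ℝ} (hq : 0 ≤ q) (hr : 0 ≤ r) :
    Continuous fun x : ℝ => x ^ q * (1 - x) ^ r :=
  (Real.continuous_rpow_const hq).mul
    ((Real.continuous_rpow_const hr).comp (continuous_const.sub continuous_id))

lemma betaFn_pos {a c : ℝ} (ha : 1 ≤ a) (hc : 1 ≤ c) : 0 < betaFn a c := by
  apply intervalIntegral.intervalIntegral_pos_of_pos_on
  · exact (contin_integrand (by linarith) (by linarith)).intervalIntegrable 0 1
  · intro x hx
    exact mul_pos (Real.rpow_pos_of_pos hx.1 _) (Real.rpow_pos_of_pos (by linarith [hx.2]) _)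
  · norm_num

lemma betaFn_eq_complex (a c : ℝ) :
    (betaFn a c : ℂ) = Complex.betaIntegral a c := by
  unfold betaFn Complex.betaIntegral
  rw [← intervalIntegral.integral_ofReal]
  apply intervalIntegral.integral_congr
  intro x hx
  rw [Set.uIcc_of_le (by norm_num : (0:ℝ) ≤ 1)] at hx
  have h1 : (0:ℝ) ≤ x := hx.1
  have h2 : (0:ℝ) ≤ 1 - x := by linarith [hx.2]
  push_cast [Complex.ofReal_cpow h1, Complex.ofReal_cpow h2]
  norm_num

lemma betaFn_split {a c : ℝ} (ha : 1 ≤ a) (hc : 1 ≤ c) :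
    betaFn a c = betaFn (a + 1) c + betaFn a (c + 1) := by
  unfold betaFn
  rw [← intervalIntegral.integral_add
    ((contin_integrand (by linarith) (by linarith)).intervalIntegrable 0 1)
    ((contin_integrand (by linarith) (by linarith)).intervalIntegrable 0 1)]
  apply intervalIntegral.integral_congr_ae
  have : ∀ x ∈ Set.Ioo (0:ℝ) 1, x ^ (a - 1) * (1 - x) ^ (c - 1) =
      x ^ (a + 1 - 1) * (1 - x) ^ (c - 1) + x ^ (a - 1) * (1 - x) ^ (c + 1 - 1) := by
    intro x hx
    have hx0 : x ≠ 0 := ne_of_gt hx.1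
    have hx1 : (1:ℝ) - x ≠ 0 := by have := hx.2; intro h; linarith [sub_eq_zero.mp h]
    have e1 : x ^ (a + 1 - 1) = x ^ (a - 1) * x := by
      rw [show a + 1 - 1 = (a - 1) + 1 by ring, Real.rpow_add_one hx0]
    have e2 : (1 - x) ^ (c + 1 - 1) = (1 - x) ^ (c - 1) * (1 - x) := by
      rw [show c + 1 - 1 = (c - 1) + 1 by ring, Real.rpow_add_one hx1]
    rw [e1, e2]; ring
  have h0 : ∀ᵐ x : ℝ ∂volume, x ≠ 0 := by rw [ae_iff]; simp
  have h1 : ∀ᵐ x : ℝ ∂volume, x ≠ 1 := by rw [ae_iff]; simp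
  filter_upwards [h0, h1] with x hx0 hx1 hmem
  rw [Set.uIoc_of_le (by norm_num : (0:ℝ) ≤ 1)] at hmem
  exact this x ⟨lt_of_le_of_ne hmem.1.le (Ne.symm hx0), lt_of_le_of_ne hmem.2 hx1⟩

lemma betaFn_rec {a c : ℝ} (ha : 1 ≤ a) (hc : 1 ≤ c) :
    betaFn (a + 1) c = a / (a + c) * betaFn a c := by
  have h := Complex.betaIntegral_recurrence (u := a) (v := c) (by simpa using by linarith)
    (by simpa using by linarith)
  rw [show ((c:ℂ) + 1) = ((c + 1 : ℝ) : ℂ) by push_cast; ring,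
    show ((a:ℂ) + 1) = ((a + 1 : ℝ) : ℂ) by push_cast; ring,
    ← betaFn_eq_complex, ← betaFn_eq_complex] at h
  have h2 : a * betaFn a (c + 1) = c * betaFn (a + 1) c := by exact_mod_cast h
  have hsplit := betaFn_split ha hc
  have hac : a + c ≠ 0 := by positivity
  have key : (a + c) * betaFn (a + 1) c = a * betaFn a c := by
    linear_combination (-a) * hsplit + (-1) * h2
  field_simp
  linarith [key]

lemma kernel_integral {b t : ℝ} (hb : b ∈ Ioo (0:ℝ) 1) (ht : t ∈ Icc (0:ℝ) 1) :
    ∫ x, betaKernel t b x ∂f3Measure = 2 * (t + b) / (1 + 2 * b) := by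
  obtain ⟨hb0, hb1⟩ := hb
  obtain ⟨ht0, ht1⟩ := ht
  set q := t / b with hqdef
  set r := (1 - t) / b with hrdef
  have hq : 0 ≤ q := div_nonneg ht0 hb0.le
  have hr : 0 ≤ r := div_nonneg (by linarith) hb0.le
  set B := betaFn (q + 1) (r + 1) with hBdef
  have hB : 0 < B := betaFn_pos (by linarith) (by linarith)
  have hind_meas : Measurable (fun x =>
      Real.toNNReal (Set.indicator (Set.Icc (0:ℝ) 1) (fun y => 2 * y) x)) :=
    measurable_real_toNNReal.comp
      ((measurable_const.mul measurable_id).indicator measurableSet_Icc)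
  have hf3 : f3Measure = volume.withDensity (fun x =>
      ((Real.toNNReal (Set.indicator (Set.Icc (0:ℝ) 1) (fun y => 2 * y) x) : ℝ≥0) : ℝ≥0∞)) := rfl
  rw [hf3, integral_withDensity_eq_integral_smul hind_meas]
  have hrw : (fun x => Real.toNNReal (Set.indicator (Set.Icc (0:ℝ) 1) (fun y => 2 * y) x)
      • betaKernel t b x) = Set.indicator (Set.Icc (0:ℝ) 1)
        (fun x => 2 * x * betaKernel t b x) := by
    funext x
    by_cases hx : x ∈ Set.Icc (0:ℝ) 1
    · rw [Set.indicator_of_mem hx, Set.indicator_of_mem hx, NNReal.smul_def,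
        Real.coe_toNNReal _ (by nlinarith [hx.1] : (0:ℝ) ≤ 2 * x), smul_eq_mul]
    · rw [Set.indicator_of_notMem hx, Set.indicator_of_notMem hx]
      simp
  rw [hrw, integral_indicator measurableSet_Icc, integral_Icc_eq_integral_Ioc,
    ← intervalIntegral.integral_of_le zero_le_one]
  have hcong : ∫ x in (0:ℝ)..1, 2 * x * betaKernel t b x =
      ∫ x in (0:ℝ)..1, (2 / B) * (x ^ (q + 1 + 1 - 1) * (1 - x) ^ (r + 1 - 1)) := by
    apply intervalIntegral.integral_congr_ae
    have h0 : ∀ᵐ x : ℝ ∂volume, x ≠ 0 := by rw [ae_iff]; simp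
    filter_upwards [h0] with x hx0 hmem
    rw [Set.uIoc_of_le (by norm_num : (0:ℝ) ≤ 1)] at hmem
    unfold betaKernel
    rw [← hqdef, ← hrdef, ← hBdef]
    have : x ^ (q + 1 + 1 - 1) = x ^ q * x := by
      rw [show q + 1 + 1 - 1 = q + 1 by ring, Real.rpow_add_one hx0]
    rw [this, show r + 1 - 1 = r by ring]
    field_simp
  rw [hcong, intervalIntegral.integral_const_mul]
  have : ∫ x in (0:ℝ)..1, x ^ (q + 1 + 1 - 1) * (1 - x) ^ (r + 1 - 1)
      = betaFn (q + 1 + 1) (r + 1) := rfl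
  rw [this, betaFn_rec (by linarith) (by linarith), ← hBdef]
  have hqr : q + r = 1 / b := by rw [hqdef, hrdef]; field_simp; ring
  have hden : q + 1 + (r + 1) = 1 / b + 2 := by rw [← hqr]; ring
  rw [hden]
  have h1 : (1 : ℝ) / b + 2 ≠ 0 := by positivity
  have h2 : (1 : ℝ) + 2 * b ≠ 0 := by positivity
  field_simp
  rw [hqdef]
  field_simp

lemma explicit_lb {p b : ℝ} (hp : 1 ≤ p) (hb0 : 0 < b) (hb1 : b < 1/2) :
    (1/4) * ((1/3) ^ p * b ^ p) ≤ ∫ t in (0:ℝ)..1, |2 * (t + b) / (1 + 2 * b) - 2 * t| ^ p := by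
  have hp0 : (0:ℝ) ≤ p := by linarith
  set K := 2 * b / (1 + 2 * b) with hKdef
  have hden : (0:ℝ) < 1 + 2 * b := by linarith
  have hK : 0 < K := by positivity
  have hfun : ∀ t : ℝ, |2 * (t + b) / (1 + 2 * b) - 2 * t| ^ p = (K * |1 - 2 * t|) ^ p := by
    intro t
    congr 1
    have harg : 2 * (t + b) / (1 + 2 * b) - 2 * t = K * (1 - 2 * t) := by
      rw [hKdef]; field_simp; ring
    rw [harg, abs_mul, abs_of_pos hK]
  simp only [hfun]
  have hcont : Continuous fun t : ℝ => (K * |1 - 2 * t|) ^ p := by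
    apply Continuous.rpow_const
    · exact continuous_const.mul (continuous_const.sub (continuous_const.mul continuous_id)).abs
    · exact fun t => Or.inr hp0
  have hnn : ∀ t : ℝ, 0 ≤ (K * |1 - 2 * t|) ^ p := fun t =>
    Real.rpow_nonneg (by positivity) p
  rw [← intervalIntegral.integral_add_adjacent_intervals
    (hcont.intervalIntegrable 0 (1/4)) (hcont.intervalIntegrable (1/4) 1)]
  have h2 : (0:ℝ) ≤ ∫ t in (1/4:ℝ)..1, (K * |1 - 2 * t|) ^ p :=
    intervalIntegral.integral_nonneg (by norm_num) (fun u _ => hnn u)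
  have h1 : (1/4) * ((1/3) ^ p * b ^ p) ≤ ∫ t in (0:ℝ)..(1/4), (K * |1 - 2 * t|) ^ p := by
    have hconst : ∫ _t in (0:ℝ)..(1/4), ((1/3) ^ p * b ^ p) = (1/4) * ((1/3) ^ p * b ^ p) := by
      rw [intervalIntegral.integral_const]
      simp [smul_eq_mul]
    rw [← hconst]
    apply intervalIntegral.integral_mono_on (by norm_num)
      (intervalIntegrable_const) (hcont.intervalIntegrable 0 (1/4))
    intro t ht
    have hb3 : (1/3 : ℝ) * b ≤ K * (1/2) := by
      rw [hKdef]
      rw [show (2 * b / (1 + 2 * b) * (1/2) : ℝ) = b / (1 + 2 * b) by ring,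
        show ((1:ℝ)/3 * b) = b / 3 by ring, div_le_div_iff₀ (by norm_num) hden]
      nlinarith
    have habs : (1/2 : ℝ) ≤ |1 - 2 * t| := by
      rw [abs_of_nonneg (by linarith [ht.2] : (0:ℝ) ≤ 1 - 2 * t)]
      linarith [ht.2]
    have hKle : (1/3 : ℝ) * b ≤ K * |1 - 2 * t| := by
      calc (1/3 : ℝ) * b ≤ K * (1/2) := hb3
        _ ≤ K * |1 - 2 * t| := by nlinarith
    calc (1/3:ℝ) ^ p * b ^ p = ((1/3) * b) ^ p := by
          rw [Real.mul_rpow (by norm_num) hb0.le]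
      _ ≤ (K * |1 - 2 * t|) ^ p := Real.rpow_le_rpow (by positivity) hKle hp0
  linarith

section Part2Aux

lemma measurable_rpow_fun {α : Type*} [MeasurableSpace α] {f g : α → ℝ}
    (hf : Measurable f) (hg : Measurable g) : Measurable fun a => f a ^ g a :=
  measurable_rpow2.comp (hf.prodMk hg)

lemma betaFn_shift (b t : ℝ) : betaFn (t/b + 1) ((1-t)/b + 1)
    = ∫ x in Set.Ioc (0:ℝ) 1, x ^ (t/b) * (1-x) ^ ((1-t)/b) := by
  unfold betaFn
  rw [intervalIntegral.integral_of_le zero_le_one]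
  simp only [add_sub_cancel_right]

lemma Bfun_measurable (b : ℝ) :
    Measurable fun t : ℝ => betaFn (t/b + 1) ((1-t)/b + 1) := by
  simp only [betaFn_shift]
  have hm : StronglyMeasurable
      (Function.uncurry fun t x : ℝ => x ^ (t/b) * (1-x) ^ ((1-t)/b)) := by
    apply Measurable.stronglyMeasurable
    exact (measurable_rpow_fun measurable_snd (measurable_fst.div_const b)).mul
      (measurable_rpow_fun (measurable_const.sub measurable_snd)
        ((measurable_const.sub measurable_fst).div_const b))
  exact hm.integral_prod_right.measurable

lemma betaKernel_measurable2 (b : ℝ) :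
    Measurable fun z : ℝ × ℝ => betaKernel z.1 b z.2 := by
  unfold betaKernel
  exact ((measurable_rpow_fun measurable_snd (measurable_fst.div_const b)).mul
    (measurable_rpow_fun (measurable_const.sub measurable_snd)
      ((measurable_const.sub measurable_fst).div_const b))).div
    ((Bfun_measurable b).comp measurable_fst)

lemma betaKernel_measurable (t b : ℝ) : Measurable fun x : ℝ => betaKernel t b x :=
  (betaKernel_measurable2 b).comp (measurable_const.prodMk measurable_id)

lemma Bfun_contOn {b : ℝ} (hb0 : 0 < b) :
    ContinuousOn (fun t : ℝ => betaFn (t/b + 1) ((1-t)/b + 1)) (Set.Icc 0 1) := by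
  rw [continuousOn_iff_continuous_restrict]
  have : (Set.Icc (0:ℝ) 1).domRestrict (fun t : ℝ => betaFn (t/b + 1) ((1-t)/b + 1))
      = fun s : Set.Icc (0:ℝ) 1 => ∫ x in (0:ℝ)..1,
          x ^ ((s:ℝ)/b) * (1-x) ^ ((1-(s:ℝ))/b) := by
    funext s
    simp only [Set.domRestrict_apply]
    unfold betaFn
    simp only [add_sub_cancel_right]
  rw [this]
  apply intervalIntegral.continuous_of_dominated_interval (bound := fun _ => (1:ℝ))
  · intro s
    exact ((contin_integrand (div_nonneg s.2.1 hb0.le)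
      (div_nonneg (by linarith [s.2.2]) hb0.le)).aestronglyMeasurable)
  · intro s
    filter_upwards with x hx
    rw [Set.uIoc_of_le (by norm_num : (0:ℝ) ≤ 1)] at hx
    have hq : 0 ≤ (s:ℝ)/b := div_nonneg s.2.1 hb0.le
    have hr : 0 ≤ (1-(s:ℝ))/b := div_nonneg (by linarith [s.2.2]) hb0.le
    have h1 : 0 ≤ x ^ ((s:ℝ)/b) := Real.rpow_nonneg hx.1.le _
    have h2 : 0 ≤ (1-x) ^ ((1-(s:ℝ))/b) := Real.rpow_nonneg (by linarith [hx.2]) _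
    rw [Real.norm_eq_abs, abs_of_nonneg (mul_nonneg h1 h2)]
    exact mul_le_one₀ (Real.rpow_le_one hx.1.le hx.2 hq) h2
      (Real.rpow_le_one (by linarith [hx.2]) (by linarith [hx.1]) hr)
  · exact intervalIntegrable_const
  · have h1 : ∀ᵐ x : ℝ ∂MeasureTheory.volume, x ≠ 1 := by
      rw [MeasureTheory.ae_iff]; simp
    filter_upwards [h1] with x hx1 hx
    rw [Set.uIoc_of_le (by norm_num : (0:ℝ) ≤ 1)] at hx
    have hx0 : x ≠ 0 := ne_of_gt hx.1
    have hx1' : (1:ℝ) - x ≠ 0 := fun h => hx1 (by linarith [sub_eq_zero.mp h])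
    apply Continuous.mul
    · exact Continuous.rpow continuous_const
        (continuous_subtype_val.div_const b) (fun _ => Or.inl hx0)
    · exact Continuous.rpow continuous_const
        ((continuous_const.sub continuous_subtype_val).div_const b) (fun _ => Or.inl hx1')

end Part2Aux

theorem bias_lower_bound_f3 (p : ℝ) (hp : 1 ≤ p) :
    ∃ C > (0:ℝ), ∃ b₀ ∈ Ioo (0:ℝ) 1, ∀ b ∈ Ioo (0:ℝ) b₀,
      (∫ t in (0:ℝ)..1, |(∫ x, betaKernel t b x ∂f3Measure) - 2 * t| ^ p) ≥ C * b ^ p ∧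
      (2 ≤ p → ∀ (n : ℕ), 0 < n → ∀ (Ω : Type) [MeasurableSpace Ω] (μ : Measure Ω),
        IsProbabilityMeasure μ → ∀ X : Fin n → Ω → ℝ,
          (∀ i, Measurable (X i)) →
          iIndepFun X μ →
          (∀ i, μ.map (X i) = f3Measure) →
          (∫ ω, (∫ t in (0:ℝ)..1,
              |(n:ℝ)⁻¹ * (∑ k, betaKernel t b (X k ω)) - 2 * t| ^ p) ∂μ) ≥ C * b ^ p) := by
  have hp0 : (0:ℝ) ≤ p := by linarith
  refine ⟨(1/4) * (1/3) ^ p, by positivity, 1/2, ⟨by norm_num, by norm_num⟩, ?_⟩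
  rintro b ⟨hb0, hb12⟩
  have hb1 : b < 1 := by linarith
  have hCb : (1/4 : ℝ) * (1/3) ^ p * b ^ p = 1/4 * ((1/3) ^ p * b ^ p) := by ring
  constructor
  · have hcongr1 : (∫ t in (0:ℝ)..1, |(∫ x, betaKernel t b x ∂f3Measure) - 2 * t| ^ p)
        = ∫ t in (0:ℝ)..1, |2 * (t + b) / (1 + 2 * b) - 2 * t| ^ p := by
      apply intervalIntegral.integral_congr
      intro t ht
      rw [Set.uIcc_of_le zero_le_one] at ht
      show |(∫ x, betaKernel t b x ∂f3Measure) - 2 * t| ^ p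
        = |2 * (t + b) / (1 + 2 * b) - 2 * t| ^ p
      rw [kernel_integral ⟨hb0, hb1⟩ ht]
    rw [ge_iff_le, hcongr1, hCb]
    exact explicit_lb hp hb0 hb12
  · intro hp2 n hn Ω _ μ hμ X hXm hind hmap
    haveI := hμ
    set ν := volume.restrict (Set.Ioc (0:ℝ) 1) with hν
    haveI hνfin : IsFiniteMeasure ν := by
      constructor
      rw [hν, Measure.restrict_apply_univ]
      simp [Real.volume_Ioc]
    -- minimum of the beta normalizing constant
    obtain ⟨t₀, ht₀, hmin⟩ := isCompact_Icc.exists_isMinOn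
      (⟨0, by norm_num⟩ : (Set.Icc (0:ℝ) 1).Nonempty) (Bfun_contOn hb0)
    set ε := betaFn (t₀/b + 1) ((1-t₀)/b + 1) with hε
    have hε0 : 0 < ε := betaFn_pos
      (by have := div_nonneg ht₀.1 hb0.le; linarith)
      (by have := div_nonneg (by linarith [ht₀.2] : (0:ℝ) ≤ 1 - t₀) hb0.le; linarith)
    have hεle : ∀ t ∈ Set.Icc (0:ℝ) 1, ε ≤ betaFn (t/b + 1) ((1-t)/b + 1) :=
      fun t ht => isMinOn_iff.mp hmin t ht
    set M := 1/ε + 2 with hM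
    have hM0 : 0 < M := by positivity
    have hnne : (n:ℝ) ≠ 0 := Nat.cast_ne_zero.mpr hn.ne'
    -- pointwise bounds on the kernel
    have hker_mem : ∀ t ∈ Set.Icc (0:ℝ) 1, ∀ x ∈ Set.Icc (0:ℝ) 1,
        betaKernel t b x ∈ Set.Icc (0:ℝ) (1/ε) := by
      intro t ht x hx
      have hq : 0 ≤ t/b := div_nonneg ht.1 hb0.le
      have hr : 0 ≤ (1-t)/b := div_nonneg (by linarith [ht.2]) hb0.le
      have hnum0 : 0 ≤ x ^ (t/b) * (1-x) ^ ((1-t)/b) :=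
        mul_nonneg (Real.rpow_nonneg hx.1 _) (Real.rpow_nonneg (by linarith [hx.2]) _)
      have hnum1 : x ^ (t/b) * (1-x) ^ ((1-t)/b) ≤ 1 :=
        mul_le_one₀ (Real.rpow_le_one hx.1 hx.2 hq) (Real.rpow_nonneg (by linarith [hx.2]) _)
          (Real.rpow_le_one (by linarith [hx.2]) (by linarith [hx.1]) hr)
      have hden : ε ≤ betaFn (t/b + 1) ((1-t)/b + 1) := hεle t ht
      constructor
      · exact div_nonneg hnum0 (by linarith)
      · unfold betaKernel
        exact div_le_div₀ (by positivity) hnum1 hε0 hden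
    -- a.e. the observations lie in [0,1]
    have hXae : ∀ᵐ ω ∂μ, ∀ k, X k ω ∈ Set.Icc (0:ℝ) 1 := by
      rw [MeasureTheory.ae_all_iff]
      intro k
      have hc : f3Measure (Set.Icc (0:ℝ) 1)ᶜ = 0 := by
        unfold f3Measure
        rw [MeasureTheory.withDensity_apply _ measurableSet_Icc.compl]
        have h0 : ∀ᵐ x ∂(volume.restrict (Set.Icc (0:ℝ) 1)ᶜ),
            ENNReal.ofReal ((Set.Icc (0:ℝ) 1).indicator (fun y => 2*y) x) = 0 := by
          filter_upwards [ae_restrict_mem measurableSet_Icc.compl] with x hx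
          rw [Set.indicator_of_notMem hx]
          simp
        rw [lintegral_congr_ae h0]
        simp
      have h2 : (μ.map (X k)) (Set.Icc (0:ℝ) 1)ᶜ = 0 := by rw [hmap k]; exact hc
      rw [Measure.map_apply (hXm k) measurableSet_Icc.compl] at h2
      rw [ae_iff]
      exact h2
    -- integrability of individual kernels
    have hInt_ker : ∀ t ∈ Set.Icc (0:ℝ) 1, ∀ k : Fin n,
        Integrable (fun ω => betaKernel t b (X k ω)) μ := by
      intro t ht k
      apply (integrable_const (1/ε)).mono'
        (((betaKernel_measurable t b).comp (hXm k)).aestronglyMeasurable)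
      filter_upwards [hXae] with ω hω
      have h := hker_mem t ht (X k ω) (hω k)
      show ‖betaKernel t b (X k ω)‖ ≤ 1/ε
      rw [Real.norm_eq_abs, abs_of_nonneg h.1]
      exact h.2
    have hInt_sum : ∀ t ∈ Set.Icc (0:ℝ) 1,
        Integrable (fun ω => (n:ℝ)⁻¹ * (∑ k, betaKernel t b (X k ω))) μ :=
      fun t ht => (integrable_finset_sum Finset.univ (fun k _ => hInt_ker t ht k)).const_mul _
    have hmeas_g : ∀ t : ℝ, Measurable fun ω => (n:ℝ)⁻¹ * (∑ k, betaKernel t b (X k ω)) :=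
      fun t => (Finset.measurable_sum Finset.univ
        (fun k _ => (betaKernel_measurable t b).comp (hXm k))).const_mul _
    -- the mean of the estimator
    have hEg : ∀ t ∈ Set.Icc (0:ℝ) 1,
        ∫ ω, (n:ℝ)⁻¹ * (∑ k, betaKernel t b (X k ω)) ∂μ = 2 * (t + b) / (1 + 2 * b) := by
      intro t ht
      rw [MeasureTheory.integral_const_mul,
        MeasureTheory.integral_finset_sum Finset.univ (fun k _ => hInt_ker t ht k)]
      have hk : ∀ k : Fin n, ∫ ω, betaKernel t b (X k ω) ∂μ = 2 * (t + b) / (1 + 2 * b) := by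
        intro k
        have h1 : ∫ x, betaKernel t b x ∂(μ.map (X k)) = ∫ ω, betaKernel t b (X k ω) ∂μ :=
          integral_map (hXm k).aemeasurable (betaKernel_measurable t b).aestronglyMeasurable
        rw [← h1, hmap k, kernel_integral ⟨hb0, hb1⟩ ht]
      rw [Finset.sum_congr rfl (fun k _ => hk k), Finset.sum_const, Finset.card_univ,
        Fintype.card_fin, nsmul_eq_mul]
      field_simp
    -- bound on |estimator - 2t|
    have hg_bd : ∀ t ∈ Set.Icc (0:ℝ) 1, ∀ ω, (∀ k, X k ω ∈ Set.Icc (0:ℝ) 1) →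
        |(n:ℝ)⁻¹ * (∑ k, betaKernel t b (X k ω)) - 2 * t| ≤ M := by
      intro t ht ω hω
      have hsum_le : (∑ k, betaKernel t b (X k ω)) ≤ (n:ℝ) * (1/ε) := by
        calc (∑ k, betaKernel t b (X k ω)) ≤ ∑ _k : Fin n, (1/ε) :=
              Finset.sum_le_sum (fun k _ => (hker_mem t ht (X k ω) (hω k)).2)
          _ = (n:ℝ) * (1/ε) := by
              rw [Finset.sum_const, Finset.card_univ, Fintype.card_fin, nsmul_eq_mul]
      have hsum_nn : 0 ≤ ∑ k, betaKernel t b (X k ω) :=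
        Finset.sum_nonneg (fun k _ => (hker_mem t ht (X k ω) (hω k)).1)
      have hninv : (0:ℝ) ≤ (n:ℝ)⁻¹ := by positivity
      have h1 : (n:ℝ)⁻¹ * (∑ k, betaKernel t b (X k ω)) ≤ 1/ε := by
        calc (n:ℝ)⁻¹ * (∑ k, betaKernel t b (X k ω)) ≤ (n:ℝ)⁻¹ * ((n:ℝ) * (1/ε)) :=
              mul_le_mul_of_nonneg_left hsum_le hninv
          _ = 1/ε := by field_simp
      have h2 : 0 ≤ (n:ℝ)⁻¹ * (∑ k, betaKernel t b (X k ω)) := mul_nonneg hninv hsum_nn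
      rw [abs_le]
      constructor <;> [skip; skip] <;> rw [hM] <;> nlinarith [ht.1, ht.2]
    -- convexity of |z|^p
    have hconv : ConvexOn ℝ Set.univ (fun z : ℝ => |z| ^ p) := by
      have himg : (abs : ℝ → ℝ) '' Set.univ = Set.Ici (0:ℝ) := by
        ext y
        constructor
        · rintro ⟨x, -, rfl⟩; exact abs_nonneg x
        · intro hy; exact ⟨y, trivial, abs_of_nonneg hy⟩
      have habs : ConvexOn ℝ Set.univ (abs : ℝ → ℝ) := by
        exact convexOn_univ_norm (E := ℝ)
      have hcomp := ConvexOn.comp (g := fun x : ℝ => x ^ p) (f := (abs : ℝ → ℝ))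
        (s := Set.univ)
        (by rw [himg]; exact convexOn_rpow hp) habs
        (by rw [himg]; exact fun x hx y _ hxy => Real.rpow_le_rpow hx hxy hp0)
      exact hcomp
    have hφcont : Continuous fun z : ℝ => |z| ^ p :=
      continuous_abs.rpow_const (fun z => Or.inr hp0)
    -- Jensen's inequality pointwise in t
    have hjensen : ∀ t ∈ Set.Icc (0:ℝ) 1, |2 * (t + b) / (1 + 2 * b) - 2 * t| ^ p ≤
        ∫ ω, |(n:ℝ)⁻¹ * (∑ k, betaKernel t b (X k ω)) - 2 * t| ^ p ∂μ := by
      intro t ht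
      have hfi : Integrable (fun ω => (n:ℝ)⁻¹ * (∑ k, betaKernel t b (X k ω)) - 2 * t) μ :=
        (hInt_sum t ht).sub (integrable_const _)
      have hgi : Integrable
          (fun ω => |(n:ℝ)⁻¹ * (∑ k, betaKernel t b (X k ω)) - 2 * t| ^ p) μ := by
        apply (integrable_const (M ^ p)).mono'
          ((measurable_rpow_fun ((hmeas_g t).sub measurable_const).abs
            measurable_const).aestronglyMeasurable)
        filter_upwards [hXae] with ω hω
        rw [Real.norm_eq_abs, abs_of_nonneg (Real.rpow_nonneg (abs_nonneg _) _)]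
        exact Real.rpow_le_rpow (abs_nonneg _) (hg_bd t ht ω hω) hp0
      have h := hconv.map_integral_le hφcont.continuousOn isClosed_univ
        (Filter.Eventually.of_forall fun ω => Set.mem_univ _) hfi hgi
      rwa [MeasureTheory.integral_sub (hInt_sum t ht) (MeasureTheory.integrable_const _),
        hEg t ht, MeasureTheory.integral_const, probReal_univ,
        one_smul] at h
    -- joint measurability and product integrability
    have hQmeas : Measurable fun z : Ω × ℝ =>
        |(n:ℝ)⁻¹ * (∑ k, betaKernel z.2 b (X k z.1)) - 2 * z.2| ^ p := by
      apply measurable_rpow_fun _ measurable_const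
      apply Measurable.abs
      apply Measurable.sub _ (measurable_const.mul measurable_snd)
      apply Measurable.const_mul
      exact Finset.measurable_sum Finset.univ (fun k _ =>
        (betaKernel_measurable2 b).comp (measurable_snd.prodMk ((hXm k).comp measurable_fst)))
    have haeXp : ∀ᵐ z ∂(μ.prod ν), ∀ k, X k z.1 ∈ Set.Icc (0:ℝ) 1 := by
      rw [ae_iff]
      apply measure_mono_null
        (fun z hz => (Set.mem_prod.mpr ⟨hz, Set.mem_univ _⟩ :
          z ∈ {ω | ¬ ∀ k, X k ω ∈ Set.Icc (0:ℝ) 1} ×ˢ Set.univ))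
      rw [Measure.prod_prod, ae_iff.mp hXae, zero_mul]
    have haet : ∀ᵐ z ∂(μ.prod ν), z.2 ∈ Set.Ioc (0:ℝ) 1 := by
      rw [ae_iff]
      apply measure_mono_null
        (fun z hz => (Set.mem_prod.mpr ⟨Set.mem_univ _, hz⟩ :
          z ∈ Set.univ ×ˢ (Set.Ioc (0:ℝ) 1)ᶜ))
      rw [Measure.prod_prod]
      have hν0 : ν (Set.Ioc (0:ℝ) 1)ᶜ = 0 := by
        rw [hν, Measure.restrict_apply measurableSet_Ioc.compl]
        simp
      rw [hν0, mul_zero]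
    have hprodInt : Integrable (fun z : Ω × ℝ =>
        |(n:ℝ)⁻¹ * (∑ k, betaKernel z.2 b (X k z.1)) - 2 * z.2| ^ p) (μ.prod ν) := by
      apply (integrable_const (M ^ p)).mono' hQmeas.aestronglyMeasurable
      filter_upwards [haeXp, haet] with z hz1 hz2
      rw [Real.norm_eq_abs, abs_of_nonneg (Real.rpow_nonneg (abs_nonneg _) _)]
      exact Real.rpow_le_rpow (abs_nonneg _)
        (hg_bd z.2 (Set.Ioc_subset_Icc_self hz2) z.1 hz1) hp0
    -- Fubini and conclusion
    have hswap := MeasureTheory.integral_integral_swap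
      (f := fun (ω : Ω) (t : ℝ) => |(n:ℝ)⁻¹ * (∑ k, betaKernel t b (X k ω)) - 2 * t| ^ p)
      (μ := μ) (ν := ν) hprodInt
    have hexp_cont : Continuous fun t : ℝ => |2 * (t + b) / (1 + 2 * b) - 2 * t| ^ p := by
      apply Continuous.rpow_const _ (fun _ => Or.inr hp0)
      exact (((continuous_const.mul (continuous_id.add continuous_const)).div_const _).sub
        (continuous_const.mul continuous_id)).abs
    have hlow : ∫ t, |2 * (t + b) / (1 + 2 * b) - 2 * t| ^ p ∂ν ≤
        ∫ t, (∫ ω, |(n:ℝ)⁻¹ * (∑ k, betaKernel t b (X k ω)) - 2 * t| ^ p ∂μ) ∂ν := by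
      apply MeasureTheory.integral_mono_ae
      · exact hexp_cont.integrableOn_Ioc
      · exact hprodInt.integral_prod_right
      · rw [hν]
        filter_upwards [ae_restrict_mem measurableSet_Ioc] with t ht
        exact hjensen t (Set.Ioc_subset_Icc_self ht)
    have hval : (1/4 : ℝ) * ((1/3) ^ p * b ^ p) ≤
        ∫ t, |2 * (t + b) / (1 + 2 * b) - 2 * t| ^ p ∂ν := by
      have := explicit_lb hp hb0 hb12 (p := p) (b := b)
      rwa [intervalIntegral.integral_of_le zero_le_one] at this
    rw [ge_iff_le, hCb]
    calc (1/4 : ℝ) * ((1/3) ^ p * b ^ p)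
        ≤ ∫ t, |2 * (t + b) / (1 + 2 * b) - 2 * t| ^ p ∂ν := hval
      _ ≤ ∫ t, (∫ ω, |(n:ℝ)⁻¹ * (∑ k, betaKernel t b (X k ω)) - 2 * t| ^ p ∂μ) ∂ν := hlow
      _ = ∫ ω, (∫ t, |(n:ℝ)⁻¹ * (∑ k, betaKernel t b (X k ω)) - 2 * t| ^ p ∂ν) ∂μ :=
          hswap.symm
      _ = ∫ ω, (∫ t in (0:ℝ)..1,
            |(n:ℝ)⁻¹ * (∑ k, betaKernel t b (X k ω)) - 2 * t| ^ p) ∂μ := by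
          congr 1
          funext ω
          rw [intervalIntegral.integral_of_le zero_le_one, hν]
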